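/- Let f : R → R be a (not necessarily continuous) piecewise affine function with finitely many break points, all contained in a compact set K₀, and let X be a real random variable with law P_X. Let \hat{X} be a cell-wise stationary Voronoi quantization of X on a grid Γ = {x_1,…,x_N} with cells C_i. Then |E[f(X)] − E[f(\hat{X})]| ≤ 2 ℓ ‖f‖_{∞,K₀} max_{i ∈ J} P_X(C_i), where J is the set of indices of cells meeting the break points, ℓ is the number of break points, and ‖f‖_{∞,K₀} = sup_{K₀} |f|, provided the union of the cells with indices in J is contained in K₀. -/

import Mathlib

open MeasureTheory Classical

/-- for a (possibly discontinuous) piecewise affine function `f` with break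
points `a_1 < ⋯ < a_ℓ` all contained in a compact set `K₀`, and a cell-wise stationary
Voronoi quantization with cells `C i`, if the union of the cells meeting `[a_1, a_ℓ]`
(whose index set `J` has at most `2ℓ` elements) is contained in `K₀`, then
`|E[f(X)] − E[f(X̂)]| ≤ 2 ℓ ‖f‖_{∞,K₀} max_{i ∈ J} μ(C i)`. -/
theorem stmt8 (μ : Measure ℝ) [IsProbabilityMeasure μ] {N ℓ : ℕ} (hℓ : 0 < ℓ)
    (x : Fin N → ℝ) (C : Fin N → Set ℝ)
    (hCmeas : ∀ i, MeasurableSet (C i))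
    (hdisj : Pairwise (Function.onFun Disjoint C))
    (hcover : (⋃ i, C i) = Set.univ)
    (hx : ∀ i, x i ∈ C i)
    (hstat : ∀ i, ∫ ξ in C i, (ξ - x i) ∂μ = 0)
    (a : Fin ℓ → ℝ) (hamono : StrictMono a)
    (f : ℝ → ℝ)
    (haff : ∀ i, (∀ k, a k ∉ C i) → ∃ α β : ℝ, ∀ ξ ∈ C i, f ξ = α * ξ + β)
    (K₀ : Set ℝ) (hK₀ : IsCompact K₀)
    (hJK : ∀ i ∈ Finset.univ.filter
        (fun i => (C i ∩ Set.Icc (a ⟨0, hℓ⟩) (a ⟨ℓ - 1, Nat.sub_lt hℓ one_pos⟩)).Nonempty),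
      C i ⊆ K₀)
    (hJcard : (Finset.univ.filter
        (fun i => (C i ∩ Set.Icc (a ⟨0, hℓ⟩) (a ⟨ℓ - 1, Nat.sub_lt hℓ one_pos⟩)).Nonempty)).card
        ≤ 2 * ℓ)
    (M : ℝ) (hM0 : 0 ≤ M) (hM : ∀ ξ ∈ K₀, |f ξ| ≤ M)
    (hintf : Integrable f μ) (hintid : Integrable (fun ξ : ℝ => ξ) μ) :
    ∀ B : ℝ, 0 ≤ B →
      (∀ i ∈ Finset.univ.filter
          (fun i => (C i ∩ Set.Icc (a ⟨0, hℓ⟩) (a ⟨ℓ - 1, Nat.sub_lt hℓ one_pos⟩)).Nonempty),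
        (μ (C i)).toReal ≤ B) →
      |(∫ ξ, f ξ ∂μ) - ∑ i, f (x i) * (μ (C i)).toReal| ≤ 2 * ℓ * M * B := by
  intro B hB0 hBle
  classical
  set J := Finset.univ.filter
      (fun i => (C i ∩ Set.Icc (a ⟨0, hℓ⟩) (a ⟨ℓ - 1, Nat.sub_lt hℓ one_pos⟩)).Nonempty) with hJdef
  -- cells containing a break point
  set J' : Finset (Fin N) := Finset.univ.filter (fun i => ∃ k, a k ∈ C i) with hJ'def
  -- every break point lies in some cell
  have hgex : ∀ k : Fin ℓ, ∃ i, a k ∈ C i := by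
    intro k
    have : a k ∈ ⋃ i, C i := by rw [hcover]; trivial
    exact Set.mem_iUnion.mp this
  choose g hg using hgex
  have hJ'sub : J' ⊆ Finset.image g Finset.univ := by
    intro i hi
    rw [hJ'def, Finset.mem_filter] at hi
    obtain ⟨-, k, hk⟩ := hi
    have : i = g k := by
      by_contra hne
      exact Set.disjoint_left.mp (hdisj hne) hk (hg k)
    exact this ▸ Finset.mem_image_of_mem g (Finset.mem_univ k)
  have hJ'card : J'.card ≤ ℓ := le_trans (Finset.card_le_card hJ'sub)
    (le_trans Finset.card_image_le (by simp))
  have hJ'J : J' ⊆ J := by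
    intro i hi
    rw [hJ'def, Finset.mem_filter] at hi
    obtain ⟨-, k, hk⟩ := hi
    rw [hJdef, Finset.mem_filter]
    refine ⟨Finset.mem_univ _, ⟨a k, hk, ?_⟩⟩
    constructor
    · exact hamono.monotone (by exact Fin.mk_le_of_le_val (Nat.zero_le _))
    · exact hamono.monotone (by
        have : (k : ℕ) ≤ ℓ - 1 := Nat.le_sub_one_of_lt k.isLt
        exact this)
  -- decomposition of the integral
  have hintfS : ∀ i, IntegrableOn f (C i) μ := fun i => hintf.integrableOn
  have hintidS : ∀ i, IntegrableOn (fun ξ : ℝ => ξ) (C i) μ := fun i => hintid.integrableOn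
  have hdec : (∫ ξ, f ξ ∂μ) = ∑ i, ∫ ξ in C i, f ξ ∂μ := by
    rw [← setIntegral_univ (μ := μ) (f := f), ← hcover]
    exact integral_iUnion_fintype hCmeas hdisj hintfS
  have hμfin : ∀ i, μ (C i) < ⊤ := fun i => (measure_lt_top μ (C i))
  -- mean of cell
  have hmean : ∀ i, ∫ ξ in C i, ξ ∂μ = x i * (μ (C i)).toReal := by
    intro i
    have h1 : ∫ ξ in C i, (ξ - x i) ∂μ
        = (∫ ξ in C i, ξ ∂μ) - ∫ _ in C i, x i ∂μ :=
      integral_sub (hintidS i) (integrableOn_const (hμfin i).ne)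
    have h2 : ∫ _ in C i, x i ∂μ = (μ (C i)).toReal * x i := by
      rw [setIntegral_const, smul_eq_mul, measureReal_def]
    rw [hstat i, h2] at h1
    linarith [h1.symm]
  -- per-cell deviation
  set d : Fin N → ℝ := fun i => (∫ ξ in C i, f ξ ∂μ) - f (x i) * (μ (C i)).toReal with hd
  have hdzero : ∀ i ∉ J', d i = 0 := by
    intro i hi
    rw [hJ'def, Finset.mem_filter] at hi
    push_neg at hi
    obtain ⟨α, β, hαβ⟩ := haff i (hi (Finset.mem_univ i))
    have h1 : (∫ ξ in C i, f ξ ∂μ) = ∫ ξ in C i, (α * ξ + β) ∂μ :=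
      setIntegral_congr_fun (hCmeas i) hαβ
    have h2 : (∫ ξ in C i, (α * ξ + β) ∂μ)
        = α * (∫ ξ in C i, ξ ∂μ) + (μ (C i)).toReal * β := by
      rw [integral_add ((hintidS i).const_mul α)
        (integrableOn_const (hμfin i).ne),
        integral_const_mul, setIntegral_const, smul_eq_mul, measureReal_def]
    rw [hd]
    simp only
    rw [h1, h2, hmean i, hαβ (x i) (hx i)]
    ring
  have hdbound : ∀ i ∈ J', |d i| ≤ 2 * M * B := by
    intro i hi
    have hiJ : i ∈ J := hJ'J hi
    have hsub : C i ⊆ K₀ := hJK i hiJ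
    have hμB : (μ (C i)).toReal ≤ B := hBle i hiJ
    have hμ0 : (0:ℝ) ≤ (μ (C i)).toReal := ENNReal.toReal_nonneg
    have h1 : |∫ ξ in C i, f ξ ∂μ| ≤ M * (μ (C i)).toReal := by
      have := norm_setIntegral_le_of_norm_le_const (f := f) (hμfin i)
        (fun ξ hξ => by simpa using hM ξ (hsub hξ))
      simpa [measureReal_def] using this
    have h2 : |f (x i) * (μ (C i)).toReal| ≤ M * (μ (C i)).toReal := by
      rw [abs_mul, abs_of_nonneg hμ0]
      exact mul_le_mul_of_nonneg_right (hM (x i) (hsub (hx i))) hμ0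
    calc |d i| ≤ |∫ ξ in C i, f ξ ∂μ| + |f (x i) * (μ (C i)).toReal| := abs_sub _ _
      _ ≤ M * (μ (C i)).toReal + M * (μ (C i)).toReal := add_le_add h1 h2
      _ = 2 * M * (μ (C i)).toReal := by ring
      _ ≤ 2 * M * B := by nlinarith
  have hsum : (∫ ξ, f ξ ∂μ) - ∑ i, f (x i) * (μ (C i)).toReal = ∑ i ∈ J', d i := by
    rw [hdec, ← Finset.sum_sub_distrib]
    exact (Finset.sum_subset (Finset.subset_univ J') (fun i _ hi => hdzero i hi)).symm
  rw [hsum]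
  calc |∑ i ∈ J', d i| ≤ ∑ i ∈ J', |d i| := Finset.abs_sum_le_sum_abs _ _
    _ ≤ ∑ _i ∈ J', 2 * M * B := Finset.sum_le_sum hdbound
    _ = J'.card * (2 * M * B) := by rw [Finset.sum_const, nsmul_eq_mul]
    _ ≤ ℓ * (2 * M * B) := by
        have : (0:ℝ) ≤ 2 * M * B := by positivity
        exact mul_le_mul_of_nonneg_right (by exact_mod_cast hJ'card) this
    _ = 2 * ℓ * M * B := by ring
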